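/- Let X be a real Banach space, let F ≥ 0 and 0 < C₁ < ρ, and let u : ℕ → X satisfy ‖u_k‖ ≤ F · e^k · (kρ/C₁)^{-k} for all k ≥ 1. Then there exists a constant K > 0, depending only on the ratio C₁/ρ, such that for every m ≥ 1 the series û_m := ∑_{n=0}^{∞} ( (m+2n)! / (2^n · n! · √(m!)) ) · u_{m+2n} converges absolutely in X and satisfies ‖û_m‖ ≤ K · F / √((m−1)!). (This is the decay estimate for Hermite expansion coefficients derived from the decay of power series coefficients of the solution of the log-affine parametric diffusion equation.) -/

import Mathlib

open scoped BigOperators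

lemma aux_expk_factorial : ∀ k : ℕ, 1 ≤ k →
    Real.exp k * (k.factorial : ℝ) ≤ Real.exp 1 * (k : ℝ) ^ (k + 1) := by
  intro k hk
  induction k with
  | zero => omega
  | succ k ih =>
    rcases Nat.eq_or_lt_of_le hk with h | h
    · simp [← h]
    · have hk1 : 1 ≤ k := by omega
      have ih' := ih hk1
      have hkpos : (0:ℝ) < k := by exact_mod_cast hk1
      set x : ℝ := 1 / ((k:ℝ) + 1) with hx
      have hx0 : 0 < x := by positivity
      have hexp : Real.exp x * ((k:ℝ)) ≤ (k:ℝ) + 1 := by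
        have h1 : -x + 1 ≤ Real.exp (-x) := Real.add_one_le_exp (-x)
        have h2 : Real.exp (-x) = (Real.exp x)⁻¹ := Real.exp_neg x
        have h3 : (1 - x) * Real.exp x ≤ 1 := by
          rw [h2] at h1
          have := mul_le_mul_of_nonneg_right (by linarith : 1 - x ≤ (Real.exp x)⁻¹)
            (Real.exp_pos x).le
          calc (1-x) * Real.exp x ≤ (Real.exp x)⁻¹ * Real.exp x := this
            _ = 1 := inv_mul_cancel₀ (Real.exp_pos x).ne'
        have hkx : (1 - x) * ((k:ℝ) + 1) = (k:ℝ) := by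
          rw [hx]; field_simp; ring
        have h4 : (1 - x) * Real.exp x * ((k:ℝ)+1) ≤ 1 * ((k:ℝ)+1) :=
          mul_le_mul_of_nonneg_right h3 (by positivity)
        have h5 : (1 - x) * Real.exp x * ((k:ℝ)+1) = Real.exp x * ((1-x) * ((k:ℝ)+1)) := by
          ring
        rw [h5, hkx, one_mul] at h4
        exact h4
      have hpow : Real.exp 1 * (k:ℝ) ^ (k+1) ≤ ((k:ℝ)+1) ^ (k+1) := by
        have := pow_le_pow_left₀ (by positivity : (0:ℝ) ≤ Real.exp x * k) hexp (k+1)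
        rw [mul_pow] at this
        have hex : (Real.exp x) ^ (k+1) = Real.exp 1 := by
          rw [← Real.exp_nat_mul]
          congr 1
          rw [hx]; field_simp; push_cast; ring
        rwa [hex] at this
      have hcast : ((k+1 : ℕ) : ℝ) = (k:ℝ) + 1 := by push_cast; ring
      calc Real.exp (k+1 : ℕ) * ((k+1).factorial : ℝ)
          = Real.exp 1 * ((k:ℝ)+1) * (Real.exp k * (k.factorial : ℝ)) := by
            rw [Nat.factorial_succ]; push_cast
            rw [Real.exp_add]; ring
        _ ≤ Real.exp 1 * ((k:ℝ)+1) * (Real.exp 1 * (k:ℝ)^(k+1)) :=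
            mul_le_mul_of_nonneg_left ih' (by positivity)
        _ ≤ Real.exp 1 * ((k:ℝ)+1) * (((k:ℝ)+1)^(k+1)) :=
            mul_le_mul_of_nonneg_left hpow (by positivity)
        _ = Real.exp 1 * ((k+1:ℕ):ℝ) ^ ((k+1) + 1) := by
            rw [hcast]; ring

lemma aux_one_add_two_le (n : ℕ) : 1 + 2 * n ≤ 3 ^ n := by
  induction n with
  | zero => norm_num
  | succ n ih =>
    have h3 : 1 ≤ 3 ^ n := Nat.one_le_pow _ _ (by norm_num)
    calc 1 + 2 * (n+1) = (1 + 2*n) + 2 := by ring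
      _ ≤ 3^n + 2 * 3^n := by omega
      _ = 3^(n+1) := by ring

lemma aux_mq (q : ℝ) (h0 : 0 < q) (h1 : q < 1) (m : ℕ) (hm : 1 ≤ m) :
    (m : ℝ) * q ^ m ≤ (1 - q)⁻¹ := by
  have h1q : 0 < 1 - q := by linarith
  have hber : 1 + (m:ℝ) * ((1-q)/q) ≤ (1 + (1-q)/q) ^ m :=
    one_add_mul_le_pow (by nlinarith [div_nonneg (by linarith : (0:ℝ) ≤ 1-q) h0.le]) m
  have heq : 1 + (1-q)/q = q⁻¹ := by field_simp; ring
  rw [heq] at hber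
  have hA : (m:ℝ) * (1 - q) ≤ q⁻¹ ^ m := by
    have : (m:ℝ) * (1-q) ≤ (m:ℝ) * ((1-q)/q) := by
      apply mul_le_mul_of_nonneg_left _ (by positivity)
      rw [le_div_iff₀ h0]; nlinarith
    linarith
  have hqm : (0:ℝ) < q ^ m := pow_pos h0 m
  have hprod : q⁻¹ ^ m * q ^ m = 1 := by
    rw [← mul_pow, inv_mul_cancel₀ h0.ne', one_pow]
  rw [inv_eq_one_div, le_div_iff₀ h1q]
  nlinarith [mul_le_mul_of_nonneg_right hA hqm.le]

theorem hermite_coeff_decay :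
    ∃ K : ℝ → ℝ,
      ∀ C₁ ρ : ℝ, 0 < C₁ → C₁ < ρ →
        0 < K (C₁ / ρ) ∧
        ∀ (X : Type) [NormedAddCommGroup X] [NormedSpace ℝ X] [CompleteSpace X]
          (F : ℝ), 0 ≤ F →
          ∀ u : ℕ → X,
            (∀ k : ℕ, 1 ≤ k →
              ‖u k‖ ≤ F * Real.exp (k : ℝ) * (((k : ℝ) * ρ / C₁) ^ k)⁻¹) →
            ∀ m : ℕ, 1 ≤ m →
              Summable (fun n : ℕ =>
                ‖(((m + 2 * n).factorial : ℝ) /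
                    ((2 : ℝ) ^ n * (n.factorial : ℝ) *
                      Real.sqrt (m.factorial : ℝ))) • u (m + 2 * n)‖) ∧
              ‖∑' n : ℕ,
                  (((m + 2 * n).factorial : ℝ) /
                    ((2 : ℝ) ^ n * (n.factorial : ℝ) *
                      Real.sqrt (m.factorial : ℝ))) • u (m + 2 * n)‖ ≤
                K (C₁ / ρ) * F / Real.sqrt ((m - 1).factorial : ℝ) := by
  refine ⟨fun q => Real.exp 1 * Real.exp (3/2) * (1 - q)⁻¹, fun C₁ ρ hC hCρ => ?_⟩
  have hρ : 0 < ρ := hC.trans hCρ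
  set q : ℝ := C₁ / ρ with hqdef
  have hq0 : 0 < q := div_pos hC hρ
  have hq1 : q < 1 := (div_lt_one hρ).2 hCρ
  have h1q : 0 < 1 - q := by linarith
  refine ⟨by positivity, ?_⟩
  intro X _ _ _ F hF u hu m hm
  have hmf : (0:ℝ) < (m.factorial : ℝ) := by exact_mod_cast m.factorial_pos
  have hsm : 0 < Real.sqrt (m.factorial : ℝ) := Real.sqrt_pos.2 hmf
  set c : ℝ := F * Real.exp 1 * ((m:ℝ) * q ^ m) / Real.sqrt (m.factorial : ℝ) with hc
  set b : ℕ → ℝ := fun n => c * ((3 * q ^ 2 / 2) ^ n / (n.factorial : ℝ)) with hb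
  set f : ℕ → X := fun n =>
    (((m + 2 * n).factorial : ℝ) /
      ((2 : ℝ) ^ n * (n.factorial : ℝ) * Real.sqrt (m.factorial : ℝ))) • u (m + 2 * n)
    with hfdef
  have hble : ∀ n : ℕ, ‖f n‖ ≤ b n := by
    intro n
    set k : ℕ := m + 2 * n with hkdef
    have hk1 : 1 ≤ k := by omega
    have hkR : (1:ℝ) ≤ (k:ℝ) := by exact_mod_cast hk1
    have hkR0 : (0:ℝ) < (k:ℝ) := by linarith
    have h2n : (0:ℝ) < (2:ℝ)^n := by positivity
    have hnf : (0:ℝ) < (n.factorial : ℝ) := by exact_mod_cast n.factorial_pos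
    have hkk : (0:ℝ) < (k:ℝ)^k := by positivity
    set D : ℝ := (2 : ℝ) ^ n * (n.factorial : ℝ) * Real.sqrt (m.factorial : ℝ) with hD
    have hD0 : 0 < D := by positivity
    set r : ℝ := (k.factorial : ℝ) / D with hr
    have hr0 : 0 ≤ r := by positivity
    have hnorm : ‖f n‖ = r * ‖u k‖ := by
      rw [hfdef, norm_smul, Real.norm_eq_abs, abs_of_nonneg hr0]
    have hinv : (((k : ℝ) * ρ / C₁) ^ k)⁻¹ = q ^ k / (k:ℝ) ^ k := by
      have h1 : (k:ℝ) * ρ / C₁ = (k:ℝ) / q := by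
        rw [hqdef]; field_simp
      rw [h1, ← inv_pow, inv_div, div_pow]
    have hu' : ‖u k‖ ≤ F * Real.exp k * (q ^ k / (k:ℝ)^k) := by
      have := hu k hk1
      rwa [hinv] at this
    have hfac : Real.exp k * (k.factorial : ℝ) ≤ Real.exp 1 * ((k:ℝ)^k * (k:ℝ)) := by
      have := aux_expk_factorial k hk1
      rwa [pow_succ] at this
    have hkle : (k:ℝ) ≤ (m:ℝ) * 3^n := by
      have hnat : k ≤ m * 3^n := by
        have h3 := aux_one_add_two_le n
        calc k = m + 2*n := hkdef
          _ ≤ m * (1 + 2*n) := by nlinarith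
          _ ≤ m * 3^n := Nat.mul_le_mul_left m h3
      calc (k:ℝ) ≤ ((m * 3^n : ℕ) : ℝ) := by exact_mod_cast hnat
        _ = (m:ℝ) * 3^n := by push_cast; ring
    have hqpow : q ^ k = q ^ m * (q^2) ^ n := by
      rw [hkdef, pow_add, pow_mul]
    calc ‖f n‖ ≤ r * (F * Real.exp k * (q ^ k / (k:ℝ)^k)) := by
          rw [hnorm]; exact mul_le_mul_of_nonneg_left hu' hr0
      _ = F * (Real.exp k * (k.factorial : ℝ)) * q ^ k / ((k:ℝ)^k * D) := by
          rw [hr]; field_simp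
      _ ≤ F * (Real.exp 1 * ((k:ℝ)^k * (k:ℝ))) * q ^ k / ((k:ℝ)^k * D) := by
          gcongr
      _ = F * Real.exp 1 * (k:ℝ) * q ^ k / D := by
          field_simp
      _ ≤ F * Real.exp 1 * ((m:ℝ) * 3^n) * (q ^ m * (q^2)^n) / D := by
          rw [hqpow]; gcongr
      _ = b n := by
          have hex : (3 * q^2/2)^n = 3^n * (q^2)^n / 2^n := by
            rw [div_pow (3*q^2) 2 n, mul_pow 3 (q^2) n]
          rw [hb, hc, hD]
          simp only [hex]
          field_simp
  have hbsum : Summable b := (Real.summable_pow_div_factorial (3*q^2/2)).mul_left c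
  have hfsum : Summable (fun n => ‖f n‖) :=
    Summable.of_nonneg_of_le (fun n => norm_nonneg _) hble hbsum
  refine ⟨hfsum, ?_⟩
  have hs1m : 0 < Real.sqrt ((m-1).factorial : ℝ) := by
    have : (0:ℝ) < ((m-1).factorial : ℝ) := by exact_mod_cast (m-1).factorial_pos
    exact Real.sqrt_pos.2 this
  have hsmle : Real.sqrt ((m-1).factorial : ℝ) ≤ Real.sqrt (m.factorial : ℝ) := by
    apply Real.sqrt_le_sqrt
    exact_mod_cast Nat.factorial_le (Nat.sub_le m 1)
  calc ‖∑' n, f n‖ ≤ ∑' n, ‖f n‖ := norm_tsum_le_tsum_norm hfsum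
    _ ≤ ∑' n, b n := Summable.tsum_le_tsum hble hfsum hbsum
    _ = c * Real.exp (3*q^2/2) := by
        rw [hb, tsum_mul_left]
        congr 1
        rw [Real.exp_eq_exp_ℝ, NormedSpace.exp_eq_tsum_div]
    _ = F * Real.exp 1 * ((m:ℝ) * q^m) * Real.exp (3*q^2/2) /
          Real.sqrt (m.factorial : ℝ) := by
        rw [hc]; ring
    _ ≤ F * Real.exp 1 * (1-q)⁻¹ * Real.exp (3/2) /
          Real.sqrt ((m-1).factorial : ℝ) := by
        gcongr
        · exact aux_mq q hq0 hq1 m hm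
        · nlinarith
    _ = Real.exp 1 * Real.exp (3/2) * (1-q)⁻¹ * F /
          Real.sqrt ((m-1).factorial : ℝ) := by ring
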